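/- Let δ ∈ (0,1), w > 0, ẇ > 0, ẅ < 0, and define w(α) = w − ẇ sin α + ẅ(1 − cos α), r = √(ẇ² + ẅ²), and β = arcsin(−ẅ/r). (i) If (1−δ)w + ẅ ≥ r, then w(α) ≥ δw for all α ∈ [0, π/2]. (ii) If (1−δ)w + ẅ < r, then ((1−δ)w + ẅ)/r ∈ [−1, 1) and w(α) ≥ δw for every α ∈ [0, π/2] with α ≤ arcsin(((1−δ)w + ẅ)/r) + β. -/
import Mathlib


/-- Case 4 (`ẇ > 0`, `ẅ < 0`) of the largest step angle computation: with
`r = √(ẇ² + ẅ²)` and `β = arcsin(−ẅ/r)`, (i) if `(1−δ)w + ẅ ≥ r` then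
`w(α) ≥ δw` on `[0, π/2]`; (ii) if `(1−δ)w + ẅ < r` then
`((1−δ)w + ẅ)/r ∈ [−1, 1)` and `w(α) ≥ δw` for every `α ∈ [0, π/2]` with
`α ≤ arcsin(((1−δ)w + ẅ)/r) + β`. -/
theorem step_angle_case4 (δ w wdot wddot : ℝ)
    (hδ : δ ∈ Set.Ioo (0 : ℝ) 1) (hw : 0 < w)
    (hwdot : 0 < wdot) (hwddot : wddot < 0) :
    let r := Real.sqrt (wdot ^ 2 + wddot ^ 2)
    let β := Real.arcsin (-wddot / r)
    ((r ≤ (1 - δ) * w + wddot →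
        ∀ α ∈ Set.Icc (0 : ℝ) (Real.pi / 2),
          δ * w ≤ w - wdot * Real.sin α + wddot * (1 - Real.cos α)) ∧
     ((1 - δ) * w + wddot < r →
        ((1 - δ) * w + wddot) / r ∈ Set.Ico (-1 : ℝ) 1 ∧
        ∀ α ∈ Set.Icc (0 : ℝ) (Real.pi / 2),
          α ≤ Real.arcsin (((1 - δ) * w + wddot) / r) + β →
          δ * w ≤ w - wdot * Real.sin α + wddot * (1 - Real.cos α))) := by
  intro r β
  have hr2 : r ^ 2 = wdot ^ 2 + wddot ^ 2 :=
    Real.sq_sqrt (by positivity)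
  have hrpos : 0 < r := Real.sqrt_pos.mpr (by positivity)
  have hwdr : wdot ≤ r := by nlinarith [sq_nonneg (r - wdot)]
  have hwddr : -r ≤ wddot := by nlinarith [sq_nonneg (r + wddot)]
  constructor
  · intro hge α hα
    have hbound : wdot * Real.sin α + wddot * Real.cos α ≤ r := by
      nlinarith [sq_nonneg (wdot * Real.cos α - wddot * Real.sin α),
        Real.sin_sq_add_cos_sq α, sq_nonneg (wdot * Real.sin α + wddot * Real.cos α - r)]
    linarith
  · intro hlt
    set c := ((1 - δ) * w + wddot) / r with hc
    obtain ⟨hδ0, hδ1⟩ := hδ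
    have hc1 : c < 1 := by
      rw [hc, div_lt_one hrpos]; exact hlt
    have hcm1 : -1 ≤ c := by
      rw [hc, le_div_iff₀ hrpos]
      nlinarith
    refine ⟨⟨hcm1, hc1⟩, ?_⟩
    intro α hα hαle
    obtain ⟨hα0, hαpi⟩ := hα
    -- β facts
    have hs : -wddot / r ∈ Set.Icc (-1 : ℝ) 1 := by
      constructor
      · have : (0:ℝ) < -wddot / r := div_pos (by linarith) hrpos
        linarith
      · rw [div_le_one hrpos]; linarith
    have hsinβ : Real.sin β = -wddot / r := Real.sin_arcsin hs.1 hs.2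
    have hcosβ : Real.cos β = wdot / r := by
      rw [show β = Real.arcsin (-wddot / r) from rfl, Real.cos_arcsin]
      rw [show 1 - (-wddot / r) ^ 2 = (wdot / r) ^ 2 by
        field_simp; nlinarith]
      exact Real.sqrt_sq (by positivity)
    have hβ0 : 0 ≤ β := Real.arcsin_nonneg.mpr (div_nonneg (by linarith) hrpos.le)
    have hβpi : β ≤ Real.pi / 2 := Real.arcsin_le_pi_div_two _
    have harcpi : Real.arcsin c ≤ Real.pi / 2 := Real.arcsin_le_pi_div_two _
    have hmem1 : α - β ∈ Set.Icc (-(Real.pi / 2)) (Real.pi / 2) := by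
      constructor <;> [linarith; linarith]
    have hmem2 : Real.arcsin c ∈ Set.Icc (-(Real.pi / 2)) (Real.pi / 2) := by
      exact ⟨Real.neg_pi_div_two_le_arcsin _, harcpi⟩
    have hsinle : Real.sin (α - β) ≤ c := by
      have := Real.strictMonoOn_sin.monotoneOn hmem1 hmem2 (by linarith)
      rwa [Real.sin_arcsin hcm1 hc1.le] at this
    have hexp : Real.sin (α - β) = Real.sin α * (wdot / r) - Real.cos α * (-wddot / r) := by
      rw [Real.sin_sub, hsinβ, hcosβ]
    have key : wdot * Real.sin α + wddot * Real.cos α ≤ (1 - δ) * w + wddot := by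
      have h2 : r * Real.sin (α - β) ≤ r * c := by
        exact mul_le_mul_of_nonneg_left hsinle hrpos.le
      rw [hexp] at h2
      rw [hc] at h2
      field_simp at h2
      linarith
    linarith
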